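/- For a partition (ℓ₁ ≥ ℓ₂ ≥ ⋯ ≥ ℓ_n ≥ 0), the number of ways to fill the Young diagram of shape (ℓ₁, …, ℓ_n) with the integers 1, 2, …, r (each used exactly once, where r = ℓ₁ + ⋯ + ℓ_n) so that entries strictly increase along each row and strictly increase down each column equals r! divided by the product of all hook lengths h_{i,j} of the diagram. -/

import Mathlib

open Finset
namespace HLF
def IsCorner (μ : YoungDiagram) (γ : ℕ × ℕ) : Prop :=
  γ ∈ μ ∧ (γ.1 + 1, γ.2) ∉ μ ∧ (γ.1, γ.2 + 1) ∉ μ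

instance (μ : YoungDiagram) : DecidablePred (IsCorner μ) := fun _ =>
  instDecidableAnd

def corners (μ : YoungDiagram) : Finset (ℕ × ℕ) := μ.cells.filter (IsCorner μ)

theorem mem_corners {μ : YoungDiagram} {γ : ℕ × ℕ} : γ ∈ corners μ ↔ IsCorner μ γ := by
  simp only [corners, Finset.mem_filter, YoungDiagram.mem_cells, and_iff_right_iff_imp]
  exact fun h => h.1

theorem rowLen_corner {μ : YoungDiagram} {γ : ℕ × ℕ} (h : IsCorner μ γ) :
    μ.rowLen γ.1 = γ.2 + 1 := by
  have h1 := YoungDiagram.mem_iff_lt_rowLen.1 h.1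
  have h2 : ¬ (γ.2 + 1 < μ.rowLen γ.1) := fun hc => h.2.2 (YoungDiagram.mem_iff_lt_rowLen.2 hc)
  omega

theorem colLen_corner {μ : YoungDiagram} {γ : ℕ × ℕ} (h : IsCorner μ γ) :
    μ.colLen γ.2 = γ.1 + 1 := by
  have h1 := YoungDiagram.mem_iff_lt_colLen.1 h.1
  have h2 : ¬ (γ.1 + 1 < μ.colLen γ.2) := fun hc => h.2.1 (YoungDiagram.mem_iff_lt_colLen.2 hc)
  omega

/-- removing a corner gives a Young diagram -/
def erase (μ : YoungDiagram) (γ : ℕ × ℕ) (h : IsCorner μ γ) : YoungDiagram where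
  cells := μ.cells.erase γ
  isLowerSet := by
    rintro ⟨i1, j1⟩ ⟨i2, j2⟩ ⟨hi, hj⟩ hm
    simp only [Finset.coe_erase, Set.mem_diff, Finset.mem_coe, YoungDiagram.mem_cells,
      Set.mem_singleton_iff] at hm ⊢
    obtain ⟨hm, hne⟩ := hm
    simp only at hi hj
    have hmem : (i2, j2) ∈ μ := μ.up_left_mem hi hj hm
    refine ⟨hmem, ?_⟩
    rintro rfl
    rcases lt_or_eq_of_le hi with hi' | hieq
    · exact h.2.1 (μ.up_left_mem hi' hj hm)
    rcases lt_or_eq_of_le hj with hj' | hjeq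
    · exact h.2.2 (μ.up_left_mem hieq.le hj' hm)
    exact hne (by rw [hieq, hjeq])

theorem mem_erase_iff {μ : YoungDiagram} {γ : ℕ × ℕ} (h : IsCorner μ γ) {c : ℕ × ℕ} :
    c ∈ erase μ γ h ↔ c ≠ γ ∧ c ∈ μ := by
  show c ∈ (erase μ γ h).cells ↔ _
  simp [erase, Finset.mem_erase, YoungDiagram.mem_cells]

theorem erase_cells {μ : YoungDiagram} {γ : ℕ × ℕ} (h : IsCorner μ γ) :
    (erase μ γ h).cells = μ.cells.erase γ := rfl

theorem erase_card {μ : YoungDiagram} {γ : ℕ × ℕ} (h : IsCorner μ γ) :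
    (erase μ γ h).cells.card = μ.cells.card - 1 := by
  rw [erase_cells, Finset.card_erase_of_mem (by simpa using h.1)]

theorem rowLen_erase {μ : YoungDiagram} {γ : ℕ × ℕ} (h : IsCorner μ γ) (i : ℕ) :
    (erase μ γ h).rowLen i = if i = γ.1 then γ.2 else μ.rowLen i := by
  obtain ⟨a, b⟩ := γ
  have hra := rowLen_corner h
  simp only at hra ⊢
  have key : ∀ j, (i, j) ∈ erase μ (a, b) h ↔ (j < if i = a then b else μ.rowLen i) := by
    intro j
    rw [mem_erase_iff h]
    split_ifs with hia
    · subst hia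
      constructor
      · rintro ⟨hne, hm⟩
        have := YoungDiagram.mem_iff_lt_rowLen.1 hm
        rw [hra] at this
        rcases Nat.lt_or_ge j b with h' | h'
        · exact h'
        · exact absurd (congrArg (Prod.mk i) (by omega : j = b)) hne
      · intro hj
        exact ⟨fun hc => by simp [Prod.ext_iff] at hc; omega,
          μ.up_left_mem le_rfl (by omega) h.1⟩
    · rw [YoungDiagram.mem_iff_lt_rowLen]
      constructor
      · exact fun hx => hx.2
      · exact fun hm => ⟨fun hc => by simp [Prod.ext_iff] at hc; omega, hm⟩
  rcases Nat.lt_trichotomy ((erase μ (a, b) h).rowLen i) (if i = a then b else μ.rowLen i)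
    with h' | h' | h'
  · have := (key _).2 h'
    rw [YoungDiagram.mem_iff_lt_rowLen] at this; omega
  · exact h'
  · have : (i, if i = a then b else μ.rowLen i) ∈ erase μ (a, b) h :=
      YoungDiagram.mem_iff_lt_rowLen.2 h'
    rw [key] at this; omega

theorem colLen_erase {μ : YoungDiagram} {γ : ℕ × ℕ} (h : IsCorner μ γ) (j : ℕ) :
    (erase μ γ h).colLen j = if j = γ.2 then γ.1 else μ.colLen j := by
  obtain ⟨a, b⟩ := γ
  have hca := colLen_corner h
  simp only at hca ⊢
  have key : ∀ i, (i, j) ∈ erase μ (a, b) h ↔ (i < if j = b then a else μ.colLen j) := by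
    intro i
    rw [mem_erase_iff h]
    split_ifs with hjb
    · subst hjb
      constructor
      · rintro ⟨hne, hm⟩
        have := YoungDiagram.mem_iff_lt_colLen.1 hm
        rw [hca] at this
        rcases Nat.lt_or_ge i a with h' | h'
        · exact h'
        · exact absurd (congrArg (fun t => (t, j)) (by omega : i = a)) hne
      · intro hi
        exact ⟨fun hc => by simp [Prod.ext_iff] at hc; omega,
          μ.up_left_mem (by omega) le_rfl h.1⟩
    · rw [YoungDiagram.mem_iff_lt_colLen]
      constructor
      · exact fun hx => hx.2
      · exact fun hm => ⟨fun hc => by simp [Prod.ext_iff] at hc; omega, hm⟩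
  rcases Nat.lt_trichotomy ((erase μ (a, b) h).colLen j) (if j = b then a else μ.colLen j)
    with h' | h' | h'
  · have := (key _).2 h'
    rw [YoungDiagram.mem_iff_lt_colLen] at this; omega
  · exact h'
  · have : (if j = b then a else μ.colLen j, j) ∈ erase μ (a, b) h :=
      YoungDiagram.mem_iff_lt_colLen.2 h'
    rw [key] at this; omega

/-- The hook length (ℕ version matching the statement). -/
def hn (μ : YoungDiagram) (x y : ℕ) : ℕ :=
  (μ.rowLen x - y) + (μ.colLen y - x) - 1

theorem hn_eq {μ : YoungDiagram} {x y : ℕ} (hm : (x, y) ∈ μ) :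
    hn μ x y = μ.rowLen x + μ.colLen y - x - y - 1 := by
  have h1 := YoungDiagram.mem_iff_lt_rowLen.1 hm
  have h2 := YoungDiagram.mem_iff_lt_colLen.1 hm
  unfold hn; omega

theorem hn_pos {μ : YoungDiagram} {x y : ℕ} (hm : (x, y) ∈ μ) : 1 ≤ hn μ x y := by
  have h1 := YoungDiagram.mem_iff_lt_rowLen.1 hm
  have h2 := YoungDiagram.mem_iff_lt_colLen.1 hm
  unfold hn; omega


/-! ### The rational weight functions -/

noncomputable def Aq (μ : YoungDiagram) (γ : ℕ × ℕ) (i : ℕ) : ℚ :=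
  1 / ((hn μ i γ.2 : ℚ) - 1)

noncomputable def Bq (μ : YoungDiagram) (γ : ℕ × ℕ) (j : ℕ) : ℚ :=
  1 / ((hn μ γ.1 j : ℚ) - 1)

noncomputable def gq (μ : YoungDiagram) (γ : ℕ × ℕ) (x : ℕ) : ℚ :=
  if x = γ.1 then 1 else Aq μ γ x * ∏ i ∈ Finset.Ico (x + 1) γ.1, (1 + Aq μ γ i)

noncomputable def kq (μ : YoungDiagram) (γ : ℕ × ℕ) (y : ℕ) : ℚ :=
  if y = γ.2 then 1 else Bq μ γ y * ∏ j ∈ Finset.Ico (y + 1) γ.2, (1 + Bq μ γ j)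

theorem hn_col_two {μ : YoungDiagram} {γ : ℕ × ℕ} (h : IsCorner μ γ) {i : ℕ} (hi : i < γ.1) :
    2 ≤ hn μ i γ.2 ∧ hn μ i γ.2 = (μ.rowLen i - γ.2) + (γ.1 - i) := by
  have h1 := rowLen_corner h
  have h2 := colLen_corner h
  have h3 := μ.rowLen_anti i γ.1 hi.le
  unfold hn; omega

theorem hn_row_two {μ : YoungDiagram} {γ : ℕ × ℕ} (h : IsCorner μ γ) {j : ℕ} (hj : j < γ.2) :
    2 ≤ hn μ γ.1 j ∧ hn μ γ.1 j = (γ.2 - j) + (μ.colLen j - γ.1) := by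
  have h1 := rowLen_corner h
  have h2 := colLen_corner h
  have h3 := μ.colLen_anti j γ.2 hj.le
  unfold hn; omega

theorem Aq_pos {μ : YoungDiagram} {γ : ℕ × ℕ} (h : IsCorner μ γ) {i : ℕ} (hi : i < γ.1) :
    0 < Aq μ γ i := by
  have := (hn_col_two h hi).1
  have h2 : (2 : ℚ) ≤ (hn μ i γ.2 : ℚ) := by exact_mod_cast this
  unfold Aq
  have : (0 : ℚ) < (hn μ i γ.2 : ℚ) - 1 := by linarith
  exact one_div_pos.2 this

theorem Bq_pos {μ : YoungDiagram} {γ : ℕ × ℕ} (h : IsCorner μ γ) {j : ℕ} (hj : j < γ.2) :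
    0 < Bq μ γ j := by
  have := (hn_row_two h hj).1
  have h2 : (2 : ℚ) ≤ (hn μ γ.1 j : ℚ) := by exact_mod_cast this
  unfold Bq
  have : (0 : ℚ) < (hn μ γ.1 j : ℚ) - 1 := by linarith
  exact one_div_pos.2 this

/-- telescoping: the sum of `g` over `Icc x α` is the product of `1 + A` over `Ico x α`. -/
theorem sum_tele (A : ℕ → ℚ) (α : ℕ) :
    ∀ x, x ≤ α →
      (∑ i ∈ Finset.Icc x α, (if i = α then 1 else A i * ∏ t ∈ Finset.Ico (i + 1) α, (1 + A t)))
        = ∏ i ∈ Finset.Ico x α, (1 + A i) := by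
  suffices H : ∀ d x, x ≤ α → α - x = d →
      (∑ i ∈ Finset.Icc x α, (if i = α then 1 else A i * ∏ t ∈ Finset.Ico (i + 1) α, (1 + A t)))
        = ∏ i ∈ Finset.Ico x α, (1 + A i) by
    exact fun x hx => H (α - x) x hx rfl
  intro d
  induction d with
  | zero =>
    intro x hx hd
    have : x = α := by omega
    subst this
    simp
  | succ d ih =>
    intro x hx hd
    have hlt : x < α := by omega
    rw [show Finset.Icc x α = insert x (Finset.Icc (x + 1) α) by
        rw [Finset.Icc_add_one_left_eq_Ioc, Finset.Ioc_insert_left hx]]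
    rw [Finset.sum_insert (by simp), ih (x + 1) (by omega) (by omega)]
    rw [if_neg (by omega), Finset.prod_eq_prod_Ico_succ_bot hlt]
    ring

theorem sum_gq {μ : YoungDiagram} {γ : ℕ × ℕ} {x : ℕ} (hx : x ≤ γ.1) :
    ∑ i ∈ Finset.Icc x γ.1, gq μ γ i = ∏ i ∈ Finset.Ico x γ.1, (1 + Aq μ γ i) :=
  sum_tele (Aq μ γ) γ.1 x hx

theorem sum_kq {μ : YoungDiagram} {γ : ℕ × ℕ} {y : ℕ} (hy : y ≤ γ.2) :
    ∑ j ∈ Finset.Icc y γ.2, kq μ γ j = ∏ j ∈ Finset.Ico y γ.2, (1 + Bq μ γ j) :=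
  sum_tele (Bq μ γ) γ.2 y hy

theorem sum_gq_Ioc {μ : YoungDiagram} {γ : ℕ × ℕ} {x : ℕ} (hx : x < γ.1) :
    ∑ i ∈ Finset.Ioc x γ.1, gq μ γ i = ∏ i ∈ Finset.Ico (x + 1) γ.1, (1 + Aq μ γ i) := by
  rw [← Finset.Icc_add_one_left_eq_Ioc]
  exact sum_gq (by omega)

theorem sum_kq_Ioc {μ : YoungDiagram} {γ : ℕ × ℕ} {y : ℕ} (hy : y < γ.2) :
    ∑ j ∈ Finset.Ioc y γ.2, kq μ γ j = ∏ j ∈ Finset.Ico (y + 1) γ.2, (1 + Bq μ γ j) := by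
  rw [← Finset.Icc_add_one_left_eq_Ioc]
  exact sum_kq (by omega)


theorem rect_mem {μ : YoungDiagram} {γ : ℕ × ℕ} (h : IsCorner μ γ) {x y : ℕ}
    (hx : x ≤ γ.1) (hy : y ≤ γ.2) : (x, y) ∈ μ :=
  μ.up_left_mem hx hy (by exact h.1)

theorem hook_split {μ : YoungDiagram} {γ : ℕ × ℕ} (h : IsCorner μ γ) {x y : ℕ}
    (hx : x < γ.1) (hy : y < γ.2) :
    ((hn μ x y : ℚ) - 1)
      = ((hn μ x γ.2 : ℚ) - 1) + ((hn μ γ.1 y : ℚ) - 1) := by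
  have h1 := (hn_col_two h hx).2
  have h2 := (hn_row_two h hy).2
  have h1' := (hn_col_two h hx).1
  have h2' := (hn_row_two h hy).1
  have hra := rowLen_corner h
  have hca := colLen_corner h
  have h3 := μ.rowLen_anti x γ.1 hx.le
  have h4 := μ.colLen_anti y γ.2 hy.le
  have hmem := rect_mem h hx.le hy.le
  have h5 := YoungDiagram.mem_iff_lt_rowLen.1 hmem
  have h6 := YoungDiagram.mem_iff_lt_colLen.1 hmem
  have key : hn μ x y + 1 = hn μ x γ.2 + hn μ γ.1 y := by
    unfold hn at *
    omega
  have : ((hn μ x y : ℚ)) + 1 = (hn μ x γ.2 : ℚ) + (hn μ γ.1 y : ℚ) := by exact_mod_cast key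
  linarith

theorem cell_identity {μ : YoungDiagram} {γ : ℕ × ℕ} (h : IsCorner μ γ) {x y : ℕ}
    (hx : x ≤ γ.1) (hy : y ≤ γ.2) (hne : ¬(x = γ.1 ∧ y = γ.2)) :
    ((hn μ x y : ℚ) - 1) * (gq μ γ x * kq μ γ y)
      = gq μ γ x * (∑ j ∈ Finset.Ioc y γ.2, kq μ γ j)
        + (∑ i ∈ Finset.Ioc x γ.1, gq μ γ i) * kq μ γ y := by
  rcases Nat.lt_or_ge x γ.1 with hx' | hx'
  · rcases Nat.lt_or_ge y γ.2 with hy' | hy'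
    · -- main case
      rw [sum_gq_Ioc hx', sum_kq_Ioc hy']
      rw [show gq μ γ x = Aq μ γ x * ∏ i ∈ Finset.Ico (x + 1) γ.1, (1 + Aq μ γ i) from
          if_neg (by omega)]
      rw [show kq μ γ y = Bq μ γ y * ∏ j ∈ Finset.Ico (y + 1) γ.2, (1 + Bq μ γ j) from
          if_neg (by omega)]
      have hsplit := hook_split h hx' hy'
      have ha : (0 : ℚ) < (hn μ x γ.2 : ℚ) - 1 := by
        have := (hn_col_two h hx').1
        have : (2 : ℚ) ≤ (hn μ x γ.2 : ℚ) := by exact_mod_cast this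
        linarith
      have hb : (0 : ℚ) < (hn μ γ.1 y : ℚ) - 1 := by
        have := (hn_row_two h hy').1
        have : (2 : ℚ) ≤ (hn μ γ.1 y : ℚ) := by exact_mod_cast this
        linarith
      unfold Aq Bq
      rw [hsplit]
      field_simp
      ring
    · -- x < γ.1, y = γ.2
      have hy2 : y = γ.2 := by omega
      subst hy2
      rw [show kq μ γ γ.2 = 1 from if_pos rfl]
      rw [show (Finset.Ioc γ.2 γ.2 : Finset ℕ) = ∅ from by simp, Finset.sum_empty]
      rw [sum_gq_Ioc hx']
      rw [show gq μ γ x = Aq μ γ x * ∏ i ∈ Finset.Ico (x + 1) γ.1, (1 + Aq μ γ i) from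
          if_neg (by omega)]
      have ha : (0 : ℚ) < (hn μ x γ.2 : ℚ) - 1 := by
        have := (hn_col_two h hx').1
        have : (2 : ℚ) ≤ (hn μ x γ.2 : ℚ) := by exact_mod_cast this
        linarith
      unfold Aq
      field_simp
      ring
  · have hx1 : x = γ.1 := by omega
    subst hx1
    have hy' : y < γ.2 := by omega
    rw [show gq μ γ γ.1 = 1 from if_pos rfl]
    rw [show (Finset.Ioc γ.1 γ.1 : Finset ℕ) = ∅ from by simp, Finset.sum_empty]
    rw [sum_kq_Ioc hy']
    rw [show kq μ γ y = Bq μ γ y * ∏ j ∈ Finset.Ico (y + 1) γ.2, (1 + Bq μ γ j) from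
        if_neg (by omega)]
    have hb : (0 : ℚ) < (hn μ γ.1 y : ℚ) - 1 := by
      have := (hn_row_two h hy').1
      have : (2 : ℚ) ≤ (hn μ γ.1 y : ℚ) := by exact_mod_cast this
      linarith
    unfold Bq
    field_simp
    ring


noncomputable def pfun (μ : YoungDiagram) (x y : ℕ) : ℚ :=
  ∑ γ ∈ corners μ, if x ≤ γ.1 ∧ y ≤ γ.2 then gq μ γ x * kq μ γ y else 0

theorem pfun_rec {μ : YoungDiagram} {x y : ℕ} (hm : (x, y) ∈ μ) (hnc : ¬IsCorner μ (x, y)) :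
    ((hn μ x y : ℚ) - 1) * pfun μ x y
      = (∑ j ∈ Finset.Ioc y (μ.rowLen x - 1), pfun μ x j)
        + (∑ i ∈ Finset.Ioc x (μ.colLen y - 1), pfun μ i y) := by
  unfold pfun
  rw [Finset.mul_sum, Finset.sum_comm (s := Finset.Ioc y (μ.rowLen x - 1)),
    Finset.sum_comm (s := Finset.Ioc x (μ.colLen y - 1)), ← Finset.sum_add_distrib]
  refine Finset.sum_congr rfl fun γ hγ => ?_
  have hcor := mem_corners.1 hγ
  by_cases hcond : x ≤ γ.1 ∧ y ≤ γ.2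
  · rw [if_pos hcond]
    have hne : ¬(x = γ.1 ∧ y = γ.2) := by
      rintro ⟨rfl, rfl⟩
      exact hnc (by convert hcor)
    have hrow : γ.2 ≤ μ.rowLen x - 1 := by
      have := YoungDiagram.mem_iff_lt_rowLen.1 (rect_mem hcor hcond.1 le_rfl)
      omega
    have hcol : γ.1 ≤ μ.colLen y - 1 := by
      have := YoungDiagram.mem_iff_lt_colLen.1 (rect_mem hcor le_rfl hcond.2)
      omega
    have e1 : (∑ j ∈ Finset.Ioc y (μ.rowLen x - 1),
        if x ≤ γ.1 ∧ j ≤ γ.2 then gq μ γ x * kq μ γ j else 0)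
        = gq μ γ x * ∑ j ∈ Finset.Ioc y γ.2, kq μ γ j := by
      rw [Finset.mul_sum, ← Finset.sum_filter]
      refine Finset.sum_congr ?_ fun _ _ => rfl
      ext j
      simp only [Finset.mem_filter, Finset.mem_Ioc]
      omega
    have e2 : (∑ i ∈ Finset.Ioc x (μ.colLen y - 1),
        if i ≤ γ.1 ∧ y ≤ γ.2 then gq μ γ i * kq μ γ y else 0)
        = (∑ i ∈ Finset.Ioc x γ.1, gq μ γ i) * kq μ γ y := by
      rw [Finset.sum_mul, ← Finset.sum_filter]
      refine Finset.sum_congr ?_ fun _ _ => rfl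
      ext i
      simp only [Finset.mem_filter, Finset.mem_Ioc]
      omega
    rw [e1, e2]
    exact cell_identity hcor hcond.1 hcond.2 hne
  · rw [if_neg hcond, mul_zero]
    have e1 : (∑ j ∈ Finset.Ioc y (μ.rowLen x - 1),
        if x ≤ γ.1 ∧ j ≤ γ.2 then gq μ γ x * kq μ γ j else 0) = 0 := by
      refine Finset.sum_eq_zero fun j hj => ?_
      rw [Finset.mem_Ioc] at hj
      rw [if_neg (by omega)]
    have e2 : (∑ i ∈ Finset.Ioc x (μ.colLen y - 1),
        if i ≤ γ.1 ∧ y ≤ γ.2 then gq μ γ i * kq μ γ y else 0) = 0 := by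
      refine Finset.sum_eq_zero fun i hi => ?_
      rw [Finset.mem_Ioc] at hi
      rw [if_neg (by omega)]
    rw [e1, e2, add_zero]

theorem rowLen_le_card {μ : YoungDiagram} (x : ℕ) : μ.rowLen x ≤ μ.cells.card := by
  rw [μ.rowLen_eq_card]
  exact Finset.card_le_card (Finset.filter_subset _ _)

theorem colLen_le_card {μ : YoungDiagram} (y : ℕ) : μ.colLen y ≤ μ.cells.card := by
  rw [μ.colLen_eq_card]
  exact Finset.card_le_card (Finset.filter_subset _ _)

theorem pfun_eq_one {μ : YoungDiagram} : ∀ {x y : ℕ}, (x, y) ∈ μ → pfun μ x y = 1 := by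
  suffices H : ∀ m x y, (x, y) ∈ μ → 2 * μ.cells.card ≤ x + y + m → pfun μ x y = 1 by
    intro x y hm
    exact H (2 * μ.cells.card) x y hm (by omega)
  intro m
  induction m with
  | zero =>
    intro x y hm hb
    exfalso
    have h1 := YoungDiagram.mem_iff_lt_rowLen.1 hm
    have h2 := YoungDiagram.mem_iff_lt_colLen.1 hm
    have h3 := rowLen_le_card (μ := μ) x
    have h4 := colLen_le_card (μ := μ) y
    omega
  | succ m ih =>
    intro x y hm hb
    by_cases hc : IsCorner μ (x, y)
    · unfold pfun
      rw [Finset.sum_eq_single_of_mem (x, y) (mem_corners.2 hc)]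
      · rw [if_pos ⟨le_rfl, le_rfl⟩]
        rw [show gq μ (x, y) x = 1 from if_pos rfl, show kq μ (x, y) y = 1 from if_pos rfl]
        norm_num
      · intro γ hγ hne
        have hcor := mem_corners.1 hγ
        by_cases hcond : x ≤ γ.1 ∧ y ≤ γ.2
        · exfalso
          rcases Nat.lt_or_ge x γ.1 with h' | h'
          · exact hc.2.1 (μ.up_left_mem h' hcond.2 hcor.1)
          · have hx1 : x = γ.1 := by omega
            rcases Nat.lt_or_ge y γ.2 with h'' | h''
            · exact hc.2.2 (μ.up_left_mem (le_of_eq hx1) h'' hcor.1)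
            · exact hne (show γ = (x, y) from Prod.ext_iff.2 ⟨hx1.symm, by omega⟩)
        · exact if_neg hcond
    · -- not a corner: use the recursion
      have h1 : y < μ.rowLen x := YoungDiagram.mem_iff_lt_rowLen.1 hm
      have h2 : x < μ.colLen y := YoungDiagram.mem_iff_lt_colLen.1 hm
      have hbig : 2 ≤ hn μ x y := by
        rcases Nat.lt_or_ge (y + 1) (μ.rowLen x) with h' | h'
        · unfold hn; omega
        rcases Nat.lt_or_ge (x + 1) (μ.colLen y) with h'' | h''
        · unfold hn; omega
        exfalso
        exact hc ⟨hm, fun hmm => by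
            have : x + 1 < μ.colLen y := YoungDiagram.mem_iff_lt_colLen.1 hmm; omega,
          fun hmm => by
            have : y + 1 < μ.rowLen x := YoungDiagram.mem_iff_lt_rowLen.1 hmm; omega⟩
      have hrec := pfun_rec hm hc
      have erow : ∑ j ∈ Finset.Ioc y (μ.rowLen x - 1), pfun μ x j
          = ((μ.rowLen x - 1 - y : ℕ) : ℚ) := by
        rw [Finset.sum_congr rfl (fun j hj => ih x j
          (YoungDiagram.mem_iff_lt_rowLen.2 (by rw [Finset.mem_Ioc] at hj; omega))
          (by rw [Finset.mem_Ioc] at hj; omega))]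
        simp [Nat.card_Ioc]
      have ecol : ∑ i ∈ Finset.Ioc x (μ.colLen y - 1), pfun μ i y
          = ((μ.colLen y - 1 - x : ℕ) : ℚ) := by
        rw [Finset.sum_congr rfl (fun i hi => ih i y
          (YoungDiagram.mem_iff_lt_colLen.2 (by rw [Finset.mem_Ioc] at hi; omega))
          (by rw [Finset.mem_Ioc] at hi; omega))]
        simp [Nat.card_Ioc]
      rw [erow, ecol] at hrec
      have hsum : ((μ.rowLen x - 1 - y : ℕ) : ℚ) + ((μ.colLen y - 1 - x : ℕ) : ℚ)
          = (hn μ x y : ℚ) - 1 := by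
        have : (μ.rowLen x - 1 - y) + (μ.colLen y - 1 - x) + 1 = hn μ x y := by
          unfold hn; omega
        have hq : ((μ.rowLen x - 1 - y : ℕ) : ℚ) + ((μ.colLen y - 1 - x : ℕ) : ℚ) + 1
            = (hn μ x y : ℚ) := by exact_mod_cast this
        linarith
      rw [hsum] at hrec
      have hne : (hn μ x y : ℚ) - 1 ≠ 0 := by
        have : (2 : ℚ) ≤ (hn μ x y : ℚ) := by exact_mod_cast hbig
        linarith
      exact mul_left_cancel₀ hne (by rw [hrec, mul_one])

noncomputable def Wq (μ : YoungDiagram) (γ : ℕ × ℕ) : ℚ :=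
  (∏ i ∈ Finset.Ico 0 γ.1, (1 + Aq μ γ i)) * (∏ j ∈ Finset.Ico 0 γ.2, (1 + Bq μ γ j))

theorem sum_Wq (μ : YoungDiagram) :
    ∑ γ ∈ corners μ, Wq μ γ = (μ.cells.card : ℚ) := by
  have step1 : ∀ γ ∈ corners μ, Wq μ γ
      = ∑ c ∈ μ.cells, (if c.1 ≤ γ.1 ∧ c.2 ≤ γ.2 then gq μ γ c.1 * kq μ γ c.2 else 0) := by
    intro γ hγ
    have hcor := mem_corners.1 hγ
    rw [← Finset.sum_filter]
    have hfil : μ.cells.filter (fun c => c.1 ≤ γ.1 ∧ c.2 ≤ γ.2)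
        = Finset.Icc 0 γ.1 ×ˢ Finset.Icc 0 γ.2 := by
      ext ⟨i, j⟩
      simp only [Finset.mem_filter, Finset.mem_product, Finset.mem_Icc,
        YoungDiagram.mem_cells, Nat.zero_le, true_and]
      constructor
      · exact fun hh => hh.2
      · exact fun hh => ⟨rect_mem hcor hh.1 hh.2, hh⟩
    rw [hfil, Finset.sum_product, Wq]
    rw [← sum_gq (Nat.zero_le γ.1), ← sum_kq (Nat.zero_le γ.2)]
    rw [Finset.sum_mul]
    exact Finset.sum_congr rfl fun i _ => by rw [Finset.mul_sum]
  rw [Finset.sum_congr rfl step1, Finset.sum_comm]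
  rw [Finset.sum_congr rfl (fun c hc => by
    have : pfun μ c.1 c.2 = 1 := pfun_eq_one (by
      rw [← YoungDiagram.mem_cells]
      simpa using hc)
    show (∑ γ ∈ corners μ, if c.1 ≤ γ.1 ∧ c.2 ≤ γ.2 then gq μ γ c.1 * kq μ γ c.2 else 0) = 1
    rw [← this]; rfl)]
  simp


noncomputable def Hq (μ : YoungDiagram) : ℚ := ∏ c ∈ μ.cells, (hn μ c.1 c.2 : ℚ)

theorem Hq_pos (μ : YoungDiagram) : 0 < Hq μ := by
  refine Finset.prod_pos fun c hc => ?_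
  have : 1 ≤ hn μ c.1 c.2 := hn_pos (by rw [← YoungDiagram.mem_cells]; simpa using hc)
  exact_mod_cast Nat.lt_of_lt_of_le Nat.zero_lt_one this

theorem hn_corner_self {μ : YoungDiagram} {γ : ℕ × ℕ} (h : IsCorner μ γ) :
    hn μ γ.1 γ.2 = 1 := by
  have h1 := rowLen_corner h
  have h2 := colLen_corner h
  unfold hn; omega

theorem hn_erase_row {μ : YoungDiagram} {γ : ℕ × ℕ} (h : IsCorner μ γ) {i : ℕ}
    (hi : i < γ.1) : hn (erase μ γ h) i γ.2 = hn μ i γ.2 - 1 ∧ 2 ≤ hn μ i γ.2 := by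
  have h2 := (hn_col_two h hi)
  have hr := rowLen_erase h i
  have hcB := colLen_erase h γ.2
  have hc := colLen_corner h
  rw [if_neg (by omega)] at hr
  rw [if_pos rfl] at hcB
  have h3 := μ.rowLen_anti i γ.1 hi.le
  have h4 := rowLen_corner h
  refine ⟨?_, h2.1⟩
  unfold hn at *
  omega

theorem hn_erase_col {μ : YoungDiagram} {γ : ℕ × ℕ} (h : IsCorner μ γ) {j : ℕ}
    (hj : j < γ.2) : hn (erase μ γ h) γ.1 j = hn μ γ.1 j - 1 ∧ 2 ≤ hn μ γ.1 j := by
  have h2 := (hn_row_two h hj)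
  have hcj := colLen_erase h j
  have hrA := rowLen_erase h γ.1
  rw [if_neg (by omega)] at hcj
  rw [if_pos rfl] at hrA
  have h3 := μ.colLen_anti j γ.2 hj.le
  have h4 := colLen_corner h
  refine ⟨?_, h2.1⟩
  unfold hn at *
  omega

theorem hn_erase_other {μ : YoungDiagram} {γ : ℕ × ℕ} (h : IsCorner μ γ) {c : ℕ × ℕ}
    (hc1 : c.1 ≠ γ.1) (hc2 : c.2 ≠ γ.2) : hn (erase μ γ h) c.1 c.2 = hn μ c.1 c.2 := by
  have hr := rowLen_erase h c.1
  have hc := colLen_erase h c.2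
  rw [if_neg hc1] at hr
  rw [if_neg hc2] at hc
  unfold hn
  rw [hr, hc]

theorem Hq_ratio {μ : YoungDiagram} {γ : ℕ × ℕ} (h : IsCorner μ γ) :
    Hq μ = Wq μ γ * Hq (erase μ γ h) := by
  classical
  set ν := erase μ γ h with hν
  have hEcells : ν.cells = μ.cells.erase γ := rfl
  -- step 1 : drop the corner cell (hook length 1)
  have step1 : Hq μ = ∏ c ∈ ν.cells, (hn μ c.1 c.2 : ℚ) := by
    rw [Hq, ← Finset.mul_prod_erase μ.cells _ (by simpa using h.1), hn_corner_self h]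
    rw [hEcells]
    norm_num
  -- step 2 : factor each hook as ratio * new hook
  have hnu_ne : ∀ c ∈ ν.cells, ((hn ν c.1 c.2 : ℚ)) ≠ 0 := by
    intro c hc
    have : 1 ≤ hn ν c.1 c.2 := hn_pos (by rw [← YoungDiagram.mem_cells]; simpa using hc)
    positivity
  have step2 : ∏ c ∈ ν.cells, (hn μ c.1 c.2 : ℚ)
      = (∏ c ∈ ν.cells, ((hn μ c.1 c.2 : ℚ) / (hn ν c.1 c.2 : ℚ)))
        * ∏ c ∈ ν.cells, (hn ν c.1 c.2 : ℚ) := by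
    rw [← Finset.prod_mul_distrib]
    refine Finset.prod_congr rfl fun c hc => ?_
    rw [div_mul_cancel₀ _ (hnu_ne c hc)]
  -- step 3 : the ratio product equals Wq
  have harms : ∏ c ∈ ν.cells, ((hn μ c.1 c.2 : ℚ) / (hn ν c.1 c.2 : ℚ)) = Wq μ γ := by
    set f : ℕ × ℕ → ℚ := fun c => (hn μ c.1 c.2 : ℚ) / (hn ν c.1 c.2 : ℚ) with hf
    set arms : Finset (ℕ × ℕ) :=
      (Finset.Ico 0 γ.1 ×ˢ {γ.2}) ∪ ({γ.1} ×ˢ Finset.Ico 0 γ.2) with harmsdef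
    have hsub : arms ⊆ ν.cells := by
      intro c hc
      simp only [harmsdef, Finset.mem_union, Finset.mem_product, Finset.mem_Ico,
        Finset.mem_singleton] at hc
      rw [hEcells, Finset.mem_erase, YoungDiagram.mem_cells]
      rcases hc with ⟨⟨_, hlt⟩, heq⟩ | ⟨heq, ⟨_, hlt⟩⟩
      · exact ⟨fun hcc => by rw [hcc] at hlt; omega,
          rect_mem h hlt.le (heq ▸ le_rfl)⟩
      · exact ⟨fun hcc => by rw [hcc] at hlt; omega,
          rect_mem h (heq ▸ le_rfl) hlt.le⟩
    rw [← Finset.prod_subset hsub (fun c hc hnc => ?_)]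
    · -- product over the arms
      have hdisj : Disjoint (Finset.Ico 0 γ.1 ×ˢ ({γ.2} : Finset ℕ))
          (({γ.1} : Finset ℕ) ×ˢ Finset.Ico 0 γ.2) := by
        rw [Finset.disjoint_left]
        rintro ⟨i, j⟩ hij hij'
        simp only [Finset.mem_product, Finset.mem_Ico, Finset.mem_singleton] at hij hij'
        omega
      rw [harmsdef, Finset.prod_union hdisj]
      have e1 : ∏ c ∈ Finset.Ico 0 γ.1 ×ˢ ({γ.2} : Finset ℕ), f c
          = ∏ i ∈ Finset.Ico 0 γ.1, (1 + Aq μ γ i) := by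
        rw [Finset.prod_product]
        refine Finset.prod_congr rfl fun i hi => ?_
        rw [Finset.mem_Ico] at hi
        rw [Finset.prod_singleton]
        obtain ⟨he, h2⟩ := hn_erase_row h hi.2
        have h2q : (2 : ℚ) ≤ (hn μ i γ.2 : ℚ) := by exact_mod_cast h2
        have heq : ((hn ν i γ.2 : ℚ)) = (hn μ i γ.2 : ℚ) - 1 := by
          rw [he]
          push_cast [Nat.cast_sub (by omega : 1 ≤ hn μ i γ.2)]
          ring
        rw [hf]
        simp only
        rw [heq, Aq]
        have : (hn μ i γ.2 : ℚ) - 1 ≠ 0 := by linarith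
        field_simp
        ring
      have e2 : ∏ c ∈ (({γ.1} : Finset ℕ) ×ˢ Finset.Ico 0 γ.2), f c
          = ∏ j ∈ Finset.Ico 0 γ.2, (1 + Bq μ γ j) := by
        rw [Finset.prod_product, Finset.prod_singleton]
        refine Finset.prod_congr rfl fun j hj => ?_
        rw [Finset.mem_Ico] at hj
        obtain ⟨he, h2⟩ := hn_erase_col h hj.2
        have h2q : (2 : ℚ) ≤ (hn μ γ.1 j : ℚ) := by exact_mod_cast h2
        have heq : ((hn ν γ.1 j : ℚ)) = (hn μ γ.1 j : ℚ) - 1 := by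
          rw [he]
          push_cast [Nat.cast_sub (by omega : 1 ≤ hn μ γ.1 j)]
          ring
        rw [hf]
        simp only
        rw [heq, Bq]
        have : (hn μ γ.1 j : ℚ) - 1 ≠ 0 := by linarith
        field_simp
        ring
      rw [e1, e2, Wq]
    · -- off the arms the ratio is 1
      have hc1 : c.1 ≠ γ.1 ∨ c.2 ≠ γ.2 → True := fun _ => trivial
      have hcmem : c ∈ μ ∧ c ≠ γ := by
        rw [hEcells, Finset.mem_erase, YoungDiagram.mem_cells] at hc
        exact ⟨hc.2, hc.1⟩
      have hnotarm : ¬(c.1 < γ.1 ∧ c.2 = γ.2) ∧ ¬(c.1 = γ.1 ∧ c.2 < γ.2) := by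
        constructor <;> intro hcc <;> apply hnc <;>
          simp only [harmsdef, Finset.mem_union, Finset.mem_product, Finset.mem_Ico,
            Finset.mem_singleton]
        · exact Or.inl ⟨⟨Nat.zero_le _, hcc.1⟩, hcc.2⟩
        · exact Or.inr ⟨hcc.1, ⟨Nat.zero_le _, hcc.2⟩⟩
      -- c is not on either arm, so both coordinates differ from γ's
      have hA : c.1 ≠ γ.1 ∧ c.2 ≠ γ.2 := by
        have hmemμ := hcmem.1
        have hy1 := YoungDiagram.mem_iff_lt_rowLen.1 (show (c.1, c.2) ∈ μ from by
          simpa using hmemμ)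
        have hy2 := YoungDiagram.mem_iff_lt_colLen.1 (show (c.1, c.2) ∈ μ from by
          simpa using hmemμ)
        have hra := rowLen_corner h
        have hca := colLen_corner h
        have hr1 := μ.rowLen_anti γ.1 c.1
        have hc1 := μ.colLen_anti γ.2 c.2
        constructor
        · intro hcc
          -- c.1 = γ.1 → c.2 < γ.2 (since c ≠ γ and c in row γ.1)
          have : c.2 < γ.2 := by
            have := hy1
            rw [hcc, hra] at this
            rcases Nat.lt_or_ge c.2 γ.2 with h' | h'
            · exact h'
            · exfalso
              exact hcmem.2 (Prod.ext_iff.2 ⟨hcc, by omega⟩)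
          exact hnotarm.2 ⟨hcc, this⟩
        · intro hcc
          have : c.1 < γ.1 := by
            have := hy2
            rw [hcc, hca] at this
            rcases Nat.lt_or_ge c.1 γ.1 with h' | h'
            · exact h'
            · exfalso
              exact hcmem.2 (Prod.ext_iff.2 ⟨by omega, hcc⟩)
          exact hnotarm.1 ⟨this, hcc⟩
      rw [hn_erase_other h hA.1 hA.2, div_self]
      have hmemμ : (c.1, c.2) ∈ μ := by simpa using hcmem.1
      have := hn_pos hmemμ
      positivity
  rw [step1, step2, harms, Hq]


/-! ### Standard Young tableaux as in the statement -/

abbrev SYT (μ : YoungDiagram) :=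
  {e : {c : ℕ × ℕ // c ∈ μ.cells} ≃ Fin μ.cells.card //
    ∀ c c' : {c : ℕ × ℕ // c ∈ μ.cells},
      ((c.1.1 = c'.1.1 ∧ c.1.2 < c'.1.2) → e c < e c') ∧
      ((c.1.2 = c'.1.2 ∧ c.1.1 < c'.1.1) → e c < e c')}

theorem card_pos_of_corner {μ : YoungDiagram} {γ : ℕ × ℕ} (h : IsCorner μ γ) :
    0 < μ.cells.card :=
  Finset.card_pos.2 ⟨γ, by simpa using h.1⟩

def topIdx (μ : YoungDiagram) (hpos : 0 < μ.cells.card) : Fin μ.cells.card :=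
  ⟨μ.cells.card - 1, by omega⟩

theorem maxCell_corner {μ : YoungDiagram} (hpos : 0 < μ.cells.card) (s : SYT μ) :
    IsCorner μ (s.1.symm (topIdx μ hpos)).1 := by
  set c := s.1.symm (topIdx μ hpos) with hc
  have hval : s.1 c = topIdx μ hpos := by rw [hc, Equiv.apply_symm_apply]
  refine ⟨(YoungDiagram.mem_cells _).1 c.2, ?_, ?_⟩
  · intro hmem
    set c' : {c : ℕ × ℕ // c ∈ μ.cells} := ⟨(c.1.1 + 1, c.1.2), (YoungDiagram.mem_cells _).2 hmem⟩
      with hc'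
    have hlt := (s.2 c c').2 ⟨rfl, Nat.lt_succ_self _⟩
    rw [hval] at hlt
    have h2 := (s.1 c').isLt
    rw [Fin.lt_def] at hlt
    simp only [topIdx] at hlt
    omega
  · intro hmem
    set c' : {c : ℕ × ℕ // c ∈ μ.cells} := ⟨(c.1.1, c.1.2 + 1), (YoungDiagram.mem_cells _).2 hmem⟩
      with hc'
    have hlt := (s.2 c c').1 ⟨rfl, Nat.lt_succ_self _⟩
    rw [hval] at hlt
    have h2 := (s.1 c').isLt
    rw [Fin.lt_def] at hlt
    simp only [topIdx] at hlt
    omega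

section Restrict

variable {μ : YoungDiagram} {γ : ℕ × ℕ} (h : IsCorner μ γ)

theorem memμ_of_memν (c : {c : ℕ × ℕ // c ∈ (erase μ γ h).cells}) : c.1 ∈ μ.cells :=
  (Finset.mem_erase.1 c.2).2

theorem neγ_of_memν (c : {c : ℕ × ℕ // c ∈ (erase μ γ h).cells}) : c.1 ≠ γ :=
  (Finset.mem_erase.1 c.2).1

theorem γcell_mem {μ : YoungDiagram} {γ : ℕ × ℕ} (h : IsCorner μ γ) : γ ∈ μ.cells := by
  simpa using h.1

/-- restriction of a standard tableau whose top entry sits at the corner `γ`. -/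
noncomputable def restrict (s : SYT μ)
    (hs : s.1 ⟨γ, γcell_mem h⟩ = topIdx μ (card_pos_of_corner h)) : SYT (erase μ γ h) := by
  have hm : (erase μ γ h).cells.card = μ.cells.card - 1 := erase_card h
  have hpos := card_pos_of_corner h
  have hbound : ∀ c : {c : ℕ × ℕ // c ∈ (erase μ γ h).cells},
      (s.1 ⟨c.1, memμ_of_memν h c⟩).1 < (erase μ γ h).cells.card := by
    intro c
    have h1 := (s.1 ⟨c.1, memμ_of_memν h c⟩).isLt
    rcases Nat.lt_or_ge (s.1 ⟨c.1, memμ_of_memν h c⟩).1 (μ.cells.card - 1) with h' | h'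
    · omega
    · exfalso
      have heq : s.1 ⟨c.1, memμ_of_memν h c⟩ = topIdx μ hpos := Fin.ext (by
        simp only [topIdx]; omega)
      rw [← hs] at heq
      have := s.1.injective heq
      exact neγ_of_memν h c (congrArg Subtype.val this)
  have hmemν : ∀ k : Fin (erase μ γ h).cells.card,
      (s.1.symm ⟨k.1, by omega⟩).1 ∈ (erase μ γ h).cells := by
    intro k
    rw [YoungDiagram.mem_cells, mem_erase_iff h]
    refine ⟨?_, (YoungDiagram.mem_cells _).1 (s.1.symm ⟨k.1, by omega⟩).2⟩
    intro hcc
    have : s.1.symm ⟨k.1, by omega⟩ = ⟨γ, γcell_mem h⟩ := Subtype.ext hcc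
    have h2 : (⟨k.1, by omega⟩ : Fin μ.cells.card) = topIdx μ hpos := by
      rw [← hs, ← this, Equiv.apply_symm_apply]
    have h3 := k.isLt
    simp only [topIdx, Fin.mk.injEq] at h2
    omega
  refine ⟨⟨fun c => ⟨(s.1 ⟨c.1, memμ_of_memν h c⟩).1, hbound c⟩,
    fun k => ⟨(s.1.symm ⟨k.1, by omega⟩).1, hmemν k⟩, ?_, ?_⟩, ?_⟩
  · intro c
    apply Subtype.ext
    show (s.1.symm _).1 = c.1
    rw [Fin.eta, Equiv.symm_apply_apply]
  · intro k
    apply Fin.ext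
    show (s.1 _).1 = k.1
    rw [Subtype.coe_eta, Equiv.apply_symm_apply]
  · intro c c'
    constructor
    · intro hcc
      have := (s.2 ⟨c.1, memμ_of_memν h c⟩ ⟨c'.1, memμ_of_memν h c'⟩).1 hcc
      rw [Fin.lt_def] at this ⊢
      exact this
    · intro hcc
      have := (s.2 ⟨c.1, memμ_of_memν h c⟩ ⟨c'.1, memμ_of_memν h c'⟩).2 hcc
      rw [Fin.lt_def] at this ⊢
      exact this

/-- extension of a standard tableau of the erased diagram, putting the top entry at `γ`. -/
noncomputable def extend (e' : SYT (erase μ γ h)) : SYT μ := by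
  have hm : (erase μ γ h).cells.card = μ.cells.card - 1 := erase_card h
  have hpos := card_pos_of_corner h
  have hmemν' : ∀ (c : ℕ × ℕ), c ∈ μ.cells → c ≠ γ → c ∈ (erase μ γ h).cells := by
    intro c h1 h2
    rw [YoungDiagram.mem_cells, mem_erase_iff h]
    exact ⟨h2, (YoungDiagram.mem_cells _).1 h1⟩
  have hne_top : ∀ (x : {c : ℕ × ℕ // c ∈ (erase μ γ h).cells})
      (hb : (e'.1 x).1 < μ.cells.card),
      (⟨(e'.1 x).1, hb⟩ : Fin μ.cells.card) ≠ topIdx μ hpos := by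
    intro x hb hcc
    have h2 := (e'.1 x).isLt
    have := congrArg Fin.val hcc
    simp only [topIdx] at this
    omega
  refine ⟨⟨fun c => if hc : c.1 = γ then topIdx μ hpos
      else ⟨(e'.1 ⟨c.1, hmemν' c.1 c.2 hc⟩).1, by have := (e'.1 ⟨c.1, hmemν' c.1 c.2 hc⟩).isLt; omega⟩,
    fun k => if hk : k = topIdx μ hpos then ⟨γ, γcell_mem h⟩
      else ⟨(e'.1.symm ⟨k.1, by
          have := k.isLt
          have h2 : k.1 ≠ μ.cells.card - 1 := fun hcc => hk (Fin.ext (by simpa [topIdx] using hcc))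
          omega⟩).1,
        memμ_of_memν h _⟩, ?_, ?_⟩, ?_⟩
  · intro c
    dsimp only
    by_cases hc : c.1 = γ
    · rw [dif_pos hc, dif_pos rfl]
      exact Subtype.ext hc.symm
    · rw [dif_neg hc, dif_neg (hne_top _ _)]
      apply Subtype.ext
      show (e'.1.symm _).1 = c.1
      rw [Fin.eta, Equiv.symm_apply_apply]
  · intro k
    dsimp only
    by_cases hk : k = topIdx μ hpos
    · rw [dif_pos hk, dif_pos rfl, hk]
    · rw [dif_neg hk, dif_neg (show ¬_ = γ from neγ_of_memν h _)]
      apply Fin.ext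
      show (e'.1 _).1 = k.1
      rw [Subtype.coe_eta, Equiv.apply_symm_apply]
  · intro c c'
    have hmono : ∀ (c c' : {c : ℕ × ℕ // c ∈ μ.cells}),
        ((c.1.1 = c'.1.1 ∧ c.1.2 < c'.1.2) ∨ (c.1.2 = c'.1.2 ∧ c.1.1 < c'.1.1)) →
        (if hc : c.1 = γ then topIdx μ hpos
          else ⟨(e'.1 ⟨c.1, hmemν' c.1 c.2 hc⟩).1, by have := (e'.1 ⟨c.1, hmemν' c.1 c.2 hc⟩).isLt; omega⟩)
        < (if hc : c'.1 = γ then topIdx μ hpos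
          else ⟨(e'.1 ⟨c'.1, hmemν' c'.1 c'.2 hc⟩).1, by have := (e'.1 ⟨c'.1, hmemν' c'.1 c'.2 hc⟩).isLt; omega⟩) := by
      intro c c' hcc
      by_cases hc' : c'.1 = γ
      · have hcne : c.1 ≠ γ := by
          intro hcγ
          rcases hcc with ⟨h1, h2⟩ | ⟨h1, h2⟩ <;> rw [hcγ, hc'] at * <;> omega
        rw [dif_pos hc', dif_neg hcne, Fin.lt_def]
        simp only [topIdx]
        have := (e'.1 ⟨c.1, hmemν' c.1 c.2 hcne⟩).isLt
        omega
      · by_cases hc : c.1 = γ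
        · exfalso
          have e1 : c.1.1 = γ.1 := by rw [hc]
          have e2 : c.1.2 = γ.2 := by rw [hc]
          have hc'm : (c'.1.1, c'.1.2) ∈ μ := by
            simpa using (YoungDiagram.mem_cells _).1 c'.2
          rcases hcc with ⟨h1, h2⟩ | ⟨h1, h2⟩
          · exact h.2.2 (μ.up_left_mem (by omega) (by omega) hc'm)
          · exact h.2.1 (μ.up_left_mem (by omega) (by omega) hc'm)
        · rw [dif_neg hc, dif_neg hc', Fin.lt_def]
          rcases hcc with hcc | hcc
          · exact (e'.2 ⟨c.1, hmemν' c.1 c.2 hc⟩ ⟨c'.1, hmemν' c'.1 c'.2 hc'⟩).1 hcc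
          · exact (e'.2 ⟨c.1, hmemν' c.1 c.2 hc⟩ ⟨c'.1, hmemν' c'.1 c'.2 hc'⟩).2 hcc
    exact ⟨fun hcc => hmono c c' (Or.inl hcc), fun hcc => hmono c c' (Or.inr hcc)⟩


theorem extend_apply_pos (e' : SYT (erase μ γ h)) (c : {c : ℕ × ℕ // c ∈ μ.cells})
    (hc : c.1 = γ) : (extend h e').1 c = topIdx μ (card_pos_of_corner h) := by
  show (if hc : c.1 = γ then _ else _) = _
  rw [dif_pos hc]

theorem extend_apply_neg (e' : SYT (erase μ γ h)) (c : {c : ℕ × ℕ // c ∈ μ.cells})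
    (hc : ¬ c.1 = γ) : ((extend h e').1 c).1
      = (e'.1 ⟨c.1, by
          rw [YoungDiagram.mem_cells, mem_erase_iff h]
          exact ⟨hc, (YoungDiagram.mem_cells _).1 c.2⟩⟩).1 := by
  show (if hc : c.1 = γ then _ else (⟨(e'.1 _).1, _⟩ : Fin μ.cells.card)).1 = _
  rw [dif_neg hc]

theorem restrict_apply (s : SYT μ)
    (hs : s.1 ⟨γ, γcell_mem h⟩ = topIdx μ (card_pos_of_corner h))
    (c : {c : ℕ × ℕ // c ∈ (erase μ γ h).cells}) :
    ((restrict h s hs).1 c).1 = (s.1 ⟨c.1, memμ_of_memν h c⟩).1 := rfl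

noncomputable def fiberEquiv :
    {s : SYT μ // s.1 ⟨γ, γcell_mem h⟩ = topIdx μ (card_pos_of_corner h)}
      ≃ SYT (erase μ γ h) where
  toFun sp := restrict h sp.1 sp.2
  invFun e' := ⟨extend h e', extend_apply_pos h e' _ rfl⟩
  left_inv := by
    rintro ⟨s, hs⟩
    apply Subtype.ext
    apply Subtype.ext
    apply Equiv.ext
    intro c
    by_cases hc : c.1 = γ
    · rw [show ((⟨extend h (restrict h s hs), _⟩ :
          {s : SYT μ // s.1 ⟨γ, γcell_mem h⟩ = topIdx μ (card_pos_of_corner h)}).1).1 c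
          = topIdx μ (card_pos_of_corner h) from extend_apply_pos h _ c hc]
      have hceq : c = ⟨γ, γcell_mem h⟩ := Subtype.ext hc
      rw [hceq] at *
      exact hs.symm
    · apply Fin.ext
      rw [show (((⟨extend h (restrict h s hs), _⟩ :
          {s : SYT μ // s.1 ⟨γ, γcell_mem h⟩ = topIdx μ (card_pos_of_corner h)}).1).1 c).1
          = ((restrict h s hs).1 ⟨c.1, _⟩).1 from extend_apply_neg h _ c hc]
      rw [restrict_apply]
  right_inv := by
    intro e'
    apply Subtype.ext
    apply Equiv.ext
    intro c
    apply Fin.ext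
    rw [restrict_apply]
    rw [extend_apply_neg h e' _ (neγ_of_memν h c)]

end Restrict

theorem card_fiber {μ : YoungDiagram} {γ : ℕ × ℕ} (h : IsCorner μ γ)
    (hpos : 0 < μ.cells.card) :
    Nat.card {s : SYT μ //
        (⟨(s.1.symm (topIdx μ hpos)).1, mem_corners.2 (maxCell_corner hpos s)⟩
          : {γ // γ ∈ corners μ}) = ⟨γ, mem_corners.2 h⟩}
      = Nat.card (SYT (erase μ γ h)) := by
  refine Nat.card_congr (Equiv.trans (Equiv.subtypeEquivRight ?_) (fiberEquiv h))
  intro s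
  rw [Subtype.mk.injEq]
  constructor
  · intro hss
    have : s.1.symm (topIdx μ hpos) = ⟨γ, γcell_mem h⟩ := Subtype.ext hss
    rw [← this, Equiv.apply_symm_apply]
  · intro hss
    have : s.1.symm (topIdx μ (card_pos_of_corner h)) = ⟨γ, γcell_mem h⟩ := by
      rw [← hss, Equiv.symm_apply_apply]
    rw [show topIdx μ hpos = topIdx μ (card_pos_of_corner h) from rfl, this]

theorem card_rec (μ : YoungDiagram) (hpos : 0 < μ.cells.card) :
    Nat.card (SYT μ)
      = ∑ γ ∈ (corners μ).attach, Nat.card (SYT (erase μ γ.1 (mem_corners.1 γ.2))) := by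
  classical
  have hfin : ∀ (ν : YoungDiagram), Finite (SYT ν) := fun ν => by infer_instance
  set F : SYT μ → {γ // γ ∈ corners μ} := fun s =>
    ⟨(s.1.symm (topIdx μ hpos)).1, mem_corners.2 (maxCell_corner hpos s)⟩ with hF
  haveI : ∀ γ : {γ // γ ∈ corners μ}, Fintype {s : SYT μ // F s = γ} := fun γ =>
    Fintype.ofFinite _
  have h1 : Nat.card (SYT μ) = ∑ γ : {γ // γ ∈ corners μ}, Nat.card {s : SYT μ // F s = γ} := by
    rw [← Nat.card_congr (Equiv.sigmaFiberEquiv F)]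
    rw [Nat.card_eq_fintype_card, Fintype.card_sigma]
    exact Finset.sum_congr rfl fun γ _ => (Nat.card_eq_fintype_card).symm
  rw [h1, ← Finset.univ_eq_attach]
  exact Finset.sum_congr rfl fun γ _ => card_fiber (mem_corners.1 γ.2) hpos


theorem card_SYT_bot {μ : YoungDiagram} (h0 : μ.cells.card = 0) : Nat.card (SYT μ) = 1 := by
  have hempty : μ.cells = ∅ := Finset.card_eq_zero.1 h0
  haveI hie : IsEmpty {c : ℕ × ℕ // c ∈ μ.cells} := ⟨fun c =>
    (Finset.eq_empty_iff_forall_notMem.1 hempty) c.1 c.2⟩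
  haveI : IsEmpty (Fin μ.cells.card) := by rw [h0]; infer_instance
  rw [Nat.card_eq_one_iff_unique]
  constructor
  · constructor
    intro e e'
    apply Subtype.ext
    apply Equiv.ext
    intro c
    exact isEmptyElim c
  · exact ⟨⟨Equiv.equivOfIsEmpty _ _, fun c => isEmptyElim c⟩⟩

theorem main_aux : ∀ (n : ℕ) (μ : YoungDiagram), μ.cells.card = n →
    (Nat.card (SYT μ) : ℚ) * Hq μ = (Nat.factorial n : ℚ) := by
  intro n
  induction n with
  | zero =>
    intro μ h0
    rw [card_SYT_bot h0, Hq, Finset.card_eq_zero.1 h0]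
    simp
  | succ m ih =>
    intro μ hcard
    have hpos : 0 < μ.cells.card := by omega
    rw [card_rec μ hpos]
    push_cast
    rw [Finset.sum_mul]
    have hterm : ∀ γ ∈ (corners μ).attach,
        (Nat.card (SYT (erase μ γ.1 (mem_corners.1 γ.2))) : ℚ) * Hq μ
          = (Nat.factorial m : ℚ) * Wq μ γ.1 := by
      intro γ _
      have h := mem_corners.1 γ.2
      have hν : (erase μ γ.1 h).cells.card = m := by
        rw [erase_card h]; omega
      have hih := ih (erase μ γ.1 h) hν
      have hHν := Hq_pos (erase μ γ.1 h)
      rw [Hq_ratio h]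
      calc (Nat.card (SYT (erase μ γ.1 h)) : ℚ) * (Wq μ γ.1 * Hq (erase μ γ.1 h))
          = ((Nat.card (SYT (erase μ γ.1 h)) : ℚ) * Hq (erase μ γ.1 h)) * Wq μ γ.1 := by ring
        _ = (Nat.factorial m : ℚ) * Wq μ γ.1 := by rw [hih]
    rw [Finset.sum_congr rfl hterm, ← Finset.mul_sum]
    rw [Finset.sum_attach (corners μ) (fun γ => Wq μ γ), sum_Wq, hcard]
    rw [Nat.factorial_succ]
    push_cast
    ring

end HLF

/-- Hook length formula: the number of standard Young tableaux of shape `μ`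
(fillings of the diagram by `1, …, r` — here modelled by `Fin r` — strictly
increasing along rows and down columns) equals `r!` divided by the product of all
hook lengths `h_{i,j} = (rowLen i − j) + (colLen j − i) − 1` (0-based indices). -/
theorem stmt_11 (μ : YoungDiagram) :
    (Nat.card {e : {c : ℕ × ℕ // c ∈ μ.cells} ≃ Fin μ.cells.card //
        ∀ c c' : {c : ℕ × ℕ // c ∈ μ.cells},
          ((c.1.1 = c'.1.1 ∧ c.1.2 < c'.1.2) → e c < e c') ∧
          ((c.1.2 = c'.1.2 ∧ c.1.1 < c'.1.1) → e c < e c')} : ℚ)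
      = (μ.cells.card.factorial : ℚ) /
          ∏ c ∈ μ.cells,
            ((((μ.rowLen c.1 - c.2) + (μ.colLen c.2 - c.1) - 1 : ℕ)) : ℚ) := by
  have key := HLF.main_aux μ.cells.card μ rfl
  have hpos := HLF.Hq_pos μ
  show (Nat.card (HLF.SYT μ) : ℚ) = (μ.cells.card.factorial : ℚ) / HLF.Hq μ
  rw [eq_div_iff (ne_of_gt hpos)]
  exact key
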